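/- Let X be a linear cycle set and A an abelian group, and suppose H²_N(X;A) = 0. Then for every central extension E = X ⊕_{f,g} A and every pair (φ,θ) ∈ Aut(X) × Aut(A), there exists ψ ∈ Aut_A(E) of the form ψ(x,a) = (φ(x), λ(x)+θ(a)) for some λ : X → A. -/

import Mathlib

/-- A (left) linear cycle set on an abelian group `X`. -/
structure LCS (X : Type*) [AddCommGroup X] where
  dot : X → X → X
  bij : ∀ x, Function.Bijective (dot x)
  cyc : ∀ x y z, dot (dot x y) (dot x z) = dot (dot y x) (dot y z)
  dot_add : ∀ x y z, dot x (y + z) = dot x y + dot x z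
  add_dot : ∀ x y z, dot (x + y) z = dot (dot x y) (dot x z)

/-- 2-cocycle conditions for a linear cycle set with coefficients in `A`. -/
def IsCocycle {X A : Type*} [AddCommGroup X] [AddCommGroup A] (L : LCS X)
    (f g : X → X → A) : Prop :=
  (∀ x y, g x y = g y x) ∧
  (∀ x y z, g x y + g (x + y) z = g y z + g x (y + z)) ∧
  (∀ x y z, f (x + y) z = f (L.dot x y) (L.dot x z) + f x z) ∧
  (∀ x y z, f x (y + z) - f x y - f x z = g (L.dot x y) (L.dot x z) - g y z)

/-- Normalised 2-cocycles, as an additive subgroup of pairs of maps. -/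
def Zn {X : Type*} [AddCommGroup X] (L : LCS X) (A : Type*) [AddCommGroup A] :
    AddSubgroup ((X → X → A) × (X → X → A)) where
  carrier := {p | IsCocycle L p.1 p.2 ∧ p.2 0 0 = 0}
  zero_mem' := by
    refine ⟨⟨?_, ?_, ?_, ?_⟩, ?_⟩ <;> intros <;> simp
  add_mem' := by
    rintro p q ⟨⟨hp1, hp2, hp3, hp4⟩, hp5⟩ ⟨⟨hq1, hq2, hq3, hq4⟩, hq5⟩
    refine ⟨⟨?_, ?_, ?_, ?_⟩, ?_⟩ <;> intros <;>
      simp only [Prod.fst_add, Prod.snd_add, Pi.add_apply]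
    · rw [hp1, hq1]
    · rw [show ∀ a b c d : A, a + b + (c + d) = (a + c) + (b + d) by intros; abel,
        hp2, hq2]; abel
    · rw [hp3, hq3]; abel
    · rw [show ∀ a b c d e h : A, a + b - (c + d) - (e + h) = (a - c - e) + (b - d - h)
        by intros; abel, hp4, hq4]; abel
    · rw [hp5, hq5]; simp
  neg_mem' := by
    rintro p ⟨⟨hp1, hp2, hp3, hp4⟩, hp5⟩
    refine ⟨⟨?_, ?_, ?_, ?_⟩, ?_⟩ <;> intros <;>
      simp only [Prod.fst_neg, Prod.snd_neg, Pi.neg_apply]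
    · rw [hp1]
    · rw [show ∀ a b : A, -a + -b = -(a + b) by intros; abel, hp2]; abel
    · rw [hp3]; abel
    · rw [show ∀ a b c : A, -a - -b - -c = -(a - b - c) by intros; abel, hp4]; abel
    · rw [hp5]; simp

/-- Normalised 2-coboundaries. -/
def Bn {X : Type*} [AddCommGroup X] (L : LCS X) (A : Type*) [AddCommGroup A] :
    AddSubgroup ((X → X → A) × (X → X → A)) where
  carrier := {p | ∃ l : X → A, l 0 = 0 ∧ (∀ x y, p.1 x y = l (L.dot x y) - l y) ∧
      (∀ x y, p.2 x y = l (x + y) - l x - l y)}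
  zero_mem' := ⟨0, by simp⟩
  add_mem' := by
    rintro p q ⟨l, hl0, hl1, hl2⟩ ⟨m, hm0, hm1, hm2⟩
    refine ⟨l + m, by simp [hl0, hm0], fun x y => ?_, fun x y => ?_⟩ <;>
      simp only [Prod.fst_add, Prod.snd_add, Pi.add_apply, hl1, hm1, hl2, hm2] <;> abel
  neg_mem' := by
    rintro p ⟨l, hl0, hl1, hl2⟩
    refine ⟨-l, by simp [hl0], fun x y => ?_, fun x y => ?_⟩ <;>
      simp only [Prod.fst_neg, Prod.snd_neg, Pi.neg_apply, hl1, hl2] <;> abel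

/-- The second normalised linear cycle set cohomology group. -/
abbrev H2N {X : Type*} [AddCommGroup X] (L : LCS X) (A : Type*) [AddCommGroup A] :=
  Zn L A ⧸ (Bn L A).addSubgroupOf (Zn L A)

/-- Symmetric group 2-cocycles of the abelian group `X` with trivial coefficients `A`. -/
def Zsym (X : Type*) [AddCommGroup X] (A : Type*) [AddCommGroup A] :
    AddSubgroup (X → X → A) where
  carrier := {g | (∀ x y, g x y = g y x) ∧
      ∀ x y z, g x y + g (x + y) z = g y z + g x (y + z)}
  zero_mem' := by refine ⟨?_, ?_⟩ <;> intros <;> simp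
  add_mem' := by
    rintro p q ⟨hp1, hp2⟩ ⟨hq1, hq2⟩
    refine ⟨?_, ?_⟩ <;> intros <;> simp only [Pi.add_apply]
    · rw [hp1, hq1]
    · rw [show ∀ a b c d : A, a + b + (c + d) = (a + c) + (b + d) by intros; abel,
        hp2, hq2]; abel
  neg_mem' := by
    rintro p ⟨hp1, hp2⟩
    refine ⟨?_, ?_⟩ <;> intros <;> simp only [Pi.neg_apply]
    · rw [hp1]
    · rw [show ∀ a b : A, -a + -b = -(a + b) by intros; abel, hp2]; abel

/-- Symmetric group 2-coboundaries. -/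
def Bsym (X : Type*) [AddCommGroup X] (A : Type*) [AddCommGroup A] :
    AddSubgroup (X → X → A) where
  carrier := {g | ∃ l : X → A, ∀ x y, g x y = l (x + y) - l x - l y}
  zero_mem' := ⟨0, by simp⟩
  add_mem' := by
    rintro p q ⟨l, hl⟩ ⟨m, hm⟩
    exact ⟨l + m, fun x y => by simp only [Pi.add_apply, hl, hm]; abel⟩
  neg_mem' := by
    rintro p ⟨l, hl⟩
    exact ⟨-l, fun x y => by simp only [Pi.neg_apply, hl]; abel⟩

/-- The second symmetric cohomology group of an abelian group. -/
abbrev H2sym (X : Type*) [AddCommGroup X] (A : Type*) [AddCommGroup A] :=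
  Zsym X A ⧸ (Bsym X A).addSubgroupOf (Zsym X A)

/-- Linear cycle set automorphisms, as a subgroup of the additive automorphisms. -/
def LCSAut {X : Type*} [AddCommGroup X] (L : LCS X) : AddSubgroup (AddAut X) where
  carrier := {φ | ∀ x y, φ (L.dot x y) = L.dot (φ x) (φ y)}
  zero_mem' := by intro x y; rfl
  add_mem' := by
    intro a b ha hb x y
    simp only [AddAut.add_apply]
    rw [hb x y, ha]
  neg_mem' := by
    intro a ha x y
    apply a.injective
    rw [ha]
    simp

/-- The transported pair of maps under a pair of automorphisms. -/
def transport {X A : Type*} [AddCommGroup X] [AddCommGroup A]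
    (φ : AddAut X) (θ : AddAut A) (p : (X → X → A) × (X → X → A)) :
    (X → X → A) × (X → X → A) :=
  (fun x y => θ (p.1 ((-φ) x) ((-φ) y)), fun x y => θ (p.2 ((-φ) x) ((-φ) y)))

/-- Addition on the extension `X ⊕_{f,g} A`. -/
def addE {X A : Type*} [AddCommGroup X] [AddCommGroup A] (g : X → X → A)
    (p q : X × A) : X × A :=
  (p.1 + q.1, p.2 + q.2 + g p.1 q.1)

/-- Cycle set operation on the extension `X ⊕_{f,g} A`. -/
def dotE {X A : Type*} [AddCommGroup X] [AddCommGroup A] (L : LCS X) (f : X → X → A)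
    (p q : X × A) : X × A :=
  (L.dot p.1 q.1, q.2 + f p.1 q.1)

/-- Normalised 1-cocycles. -/
def Z1 {X : Type*} [AddCommGroup X] (L : LCS X) (A : Type*) [AddCommGroup A] :
    AddSubgroup (X → A) where
  carrier := {l | (∀ x y, l (x + y) = l x + l y) ∧ ∀ x y, l (L.dot x y) = l y}
  zero_mem' := by refine ⟨?_, ?_⟩ <;> intros <;> simp
  add_mem' := by
    rintro p q ⟨hp1, hp2⟩ ⟨hq1, hq2⟩
    refine ⟨?_, ?_⟩ <;> intros <;> simp only [Pi.add_apply, hp1, hq1, hp2, hq2] <;> abel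
  neg_mem' := by
    rintro p ⟨hp1, hp2⟩
    refine ⟨?_, ?_⟩ <;> intros <;> simp only [Pi.neg_apply, hp1, hp2] <;> abel

/-- The subgroup `Aut_A(E)` of the permutation group of `E = X ⊕_{f,g} A`. -/
def AutAE {X A : Type*} [AddCommGroup X] [AddCommGroup A] (L : LCS X)
    (f g : X → X → A) : Subgroup (Equiv.Perm (X × A)) where
  carrier := {ψ | (∀ p q, ψ (addE g p q) = addE g (ψ p) (ψ q)) ∧
      (∀ p q, ψ (dotE L f p q) = dotE L f (ψ p) (ψ q)) ∧
      ∃ φ ∈ LCSAut L, ∃ θ : AddAut A, ∃ l : X → A, ∀ x a, ψ (x, a) = (φ x, l x + θ a)}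
  one_mem' := by
    refine ⟨fun p q => rfl, fun p q => rfl, 0, zero_mem _, 0, 0, fun x a => by simp⟩
  mul_mem' := by
    rintro a b ⟨ha1, ha2, φa, hφa, θa, la, ha3⟩ ⟨hb1, hb2, φb, hφb, θb, lb, hb3⟩
    refine ⟨fun p q => ?_, fun p q => ?_, φa + φb, add_mem hφa hφb, θa + θb,
      fun x => la (φb x) + θa (lb x), fun x a => ?_⟩
    · simp only [Equiv.Perm.mul_apply, hb1, ha1]
    · simp only [Equiv.Perm.mul_apply, hb2, ha2]
    · simp only [Equiv.Perm.mul_apply, hb3, ha3, AddAut.add_apply, map_add]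
      abel_nf
  inv_mem' := by
    rintro ψ ⟨h1, h2, φ, hφ, θ, l, h3⟩
    refine ⟨fun p q => ?_, fun p q => ?_, -φ, neg_mem hφ, -θ,
      fun x => -(-θ) (l ((-φ) x)), fun x a => ?_⟩
    · apply ψ.injective
      simp only [Equiv.Perm.coe_inv, Equiv.apply_symm_apply, h1]
    · apply ψ.injective
      simp only [Equiv.Perm.coe_inv, Equiv.apply_symm_apply, h2]
    · apply ψ.injective
      rw [Equiv.Perm.coe_inv, Equiv.apply_symm_apply, h3]
      simp

/-- A predicate packaging the linear cycle set axioms for a pair of binary operations. -/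
structure IsLCSOps {Y : Type*} (add : Y → Y → Y) (dot : Y → Y → Y) : Prop where
  add_assoc : ∀ a b c, add (add a b) c = add a (add b c)
  add_comm : ∀ a b, add a b = add b a
  zero_exists : ∃ e, (∀ a, add e a = a) ∧ ∀ a, ∃ b, add a b = e
  bij : ∀ a, Function.Bijective (dot a)
  cyc : ∀ a b c, dot (dot a b) (dot a c) = dot (dot b a) (dot b c)
  dot_add : ∀ a b c, dot a (add b c) = add (dot a b) (dot a c)
  add_dot : ∀ a b c, dot (add a b) c = dot (dot a b) (dot a c)

/-- The trivial linear cycle set on an abelian group. -/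
def trivLCS (X : Type*) [AddCommGroup X] : LCS X where
  dot := fun _ y => y
  bij := fun _ => Function.bijective_id
  cyc := fun _ _ _ => rfl
  dot_add := fun _ _ _ => rfl
  add_dot := fun _ _ _ => rfl
theorem lift_automorphisms_of_trivial_H2 {X A : Type*} [AddCommGroup X] [AddCommGroup A]
    (L : LCS X) (hH : ∀ c : H2N L A, c = 0)
    (f g : X → X → A) (hfg : (f, g) ∈ Zn L A)
    (φ : AddAut X) (hφ : φ ∈ LCSAut L) (θ : AddAut A) :
    ∃ ψ : Equiv.Perm (X × A), ψ ∈ AutAE L f g ∧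
      ∃ l : X → A, ∀ x a, ψ (x, a) = (φ x, l x + θ a) := by
  classical
  obtain ⟨⟨h1, h2, h3, h4⟩, h5⟩ := hfg
  dsimp only at h1 h2 h3 h4 h5
  have key : ∀ a1 a2 a3 b1 b2 b3 c1 c2 d1 d2 : A,
      a1 - a2 - a3 = c1 - c2 → b1 - b2 - b3 = d1 - d2 →
      a1 - b1 - (a2 - b2) - (a3 - b3) = c1 - d1 - (c2 - d2) := by
    intro a1 a2 a3 b1 b2 b3 c1 c2 d1 d2 e1 e2
    rw [show a1 - b1 - (a2 - b2) - (a3 - b3) = a1 - a2 - a3 - (b1 - b2 - b3) from by abel,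
      e1, e2]
    abel
  have hmem : ((fun x y => f (φ x) (φ y) - θ (f x y),
      fun x y => g (φ x) (φ y) - θ (g x y)) : (X → X → A) × (X → X → A)) ∈ Zn L A := by
    refine ⟨⟨?_, ?_, ?_, ?_⟩, ?_⟩
    · intro x y
      dsimp only
      rw [h1 x y, h1 (φ x) (φ y)]
    · intro x y z
      dsimp only
      rw [sub_add_sub_comm, sub_add_sub_comm, map_add φ, h2 (φ x) (φ y) (φ z),
        ← map_add θ, h2 x y z, map_add θ, map_add φ]
    · intro x y z
      dsimp only
      rw [map_add φ, hφ x y, hφ x z, h3 (φ x) (φ y) (φ z),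
        show θ (f (x + y) z) = θ (f (L.dot x y) (L.dot x z)) + θ (f x z) from by
          rw [← map_add, ← h3]]
      abel
    · intro x y z
      dsimp only
      rw [map_add φ, hφ x y, hφ x z]
      refine key _ _ _ _ _ _ _ _ _ _ (h4 (φ x) (φ y) (φ z)) ?_
      rw [← map_sub, ← map_sub, h4, map_sub]
    · simp [h5]
  have hBn : ((fun x y => f (φ x) (φ y) - θ (f x y),
      fun x y => g (φ x) (φ y) - θ (g x y)) : (X → X → A) × (X → X → A)) ∈ Bn L A := by
    have hq := hH (QuotientAddGroup.mk (⟨_, hmem⟩ : Zn L A))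
    rw [QuotientAddGroup.eq_zero_iff, AddSubgroup.mem_addSubgroupOf] at hq
    exact hq
  obtain ⟨l, hl0, hl1, hl2⟩ := hBn
  dsimp only at hl1 hl2
  have key1 : ∀ x y : X, f (φ x) (φ y) = θ (f x y) + (l (L.dot x y) - l y) := by
    intro x y
    rw [← hl1 x y]; abel
  have key2 : ∀ x y : X, g (φ x) (φ y) = θ (g x y) + (l (x + y) - l x - l y) := by
    intro x y
    rw [← hl2 x y]; abel
  refine ⟨{ toFun := fun p => (φ p.1, l p.1 + θ p.2),
            invFun := fun p => ((-φ) p.1, (-θ) (p.2 - l ((-φ) p.1))),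
            left_inv := ?_, right_inv := ?_ },
    ⟨?_, ?_, φ, hφ, θ, l, fun x a => rfl⟩, l, fun x a => rfl⟩
  · intro p
    simp
  · intro p
    simp
  · intro p q
    simp only [Equiv.coe_fn_mk, addE, map_add, Prod.mk.injEq]
    refine ⟨by trivial, ?_⟩
    rw [key2 p.1 q.1]
    abel
  · intro p q
    simp only [Equiv.coe_fn_mk, dotE, map_add, Prod.mk.injEq]
    refine ⟨hφ p.1 q.1, ?_⟩
    rw [key1 p.1 q.1]
    abel
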